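/- Applying the sequence X on qubit 1 followed by SQiSW gates on consecutive pairs (1,2), (2,3), …, (n−1,n) to |0⟩^⊗n yields the state Σᵢ αᵢ |0…010…0⟩ (1 in position i) with αᵢ = 2^{−i/2} for i ≤ n−1 and αₙ = 2^{−(n−1)/2}; in particular all αᵢ > 0 and Σ|αᵢ|² = 1. -/

import Mathlib

open Complex

/-- Apply the SQiSW gate to qubits `a`, `b` of an `n`-qubit state:
|01⟩↦(|01⟩+i|10⟩)/√2, |10⟩↦(i|01⟩+|10⟩)/√2 on those qubits, identity elsewhere. -/
noncomputable def applySQ (n : ℕ) (a b : Fin n) (ψ : (Fin n → Fin 2) → ℂ) :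
    (Fin n → Fin 2) → ℂ :=
  fun s =>
    if s a = s b then ψ s
    else ((1 : ℂ) / Real.sqrt 2) * ψ s +
      (I / Real.sqrt 2) * ψ (fun k => if k = a then s b else if k = b then s a else s k)

/-- The state obtained from |0…0⟩ by applying X on qubit 1 and then SQiSW on the pairs
(1,2), (2,3), …, (n−1,n). -/
noncomputable def wState (n : ℕ) : (Fin n → Fin 2) → ℂ :=
  (List.finRange (n - 1)).foldl
    (fun ψ j =>
      applySQ n ⟨j.val, by have := j.isLt; omega⟩ ⟨j.val + 1, by have := j.isLt; omega⟩ ψ)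
    (fun s => if s = (fun k : Fin n => if (k : ℕ) = 0 then (1 : Fin 2) else 0) then 1 else 0)

/-- The amplitudes αᵢ = 2^{−i/2} for i ≤ n−1 and αₙ = 2^{−(n−1)/2} (0-indexed here). -/
noncomputable def wAmp (n : ℕ) (i : Fin n) : ℝ :=
  if (i : ℕ) < n - 1 then (2 : ℝ) ^ (-(((i : ℕ) : ℝ) + 1) / 2)
  else (2 : ℝ) ^ (-((n : ℝ) - 1) / 2)

namespace SQAux

/-- single-excitation basis state -/
def eSt (n : ℕ) (i : Fin n) : Fin n → Fin 2 := fun k => if k = i then 1 else 0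

lemma eSt_inj {n : ℕ} {i j : Fin n} (h : eSt n i = eSt n j) : i = j := by
  by_contra hij
  have := congrFun h i
  simp only [eSt, if_pos rfl, if_neg hij] at this
  exact absurd this (by decide)

lemma eSt_self (n : ℕ) (i : Fin n) : eSt n i i = 1 := by simp [eSt]

lemma eSt_ne (n : ℕ) {i k : Fin n} (h : k ≠ i) : eSt n i k = 0 := by simp [eSt, h]

/-- coefficient after `m` gates -/
noncomputable def coeff (m i : ℕ) : ℂ :=
  if i < m then I ^ i * (((Real.sqrt 2 : ℝ) : ℂ))⁻¹ ^ (i + 1)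
  else if i = m then I ^ i * (((Real.sqrt 2 : ℝ) : ℂ))⁻¹ ^ i
  else 0

noncomputable def phiSt (n m : ℕ) : (Fin n → Fin 2) → ℂ :=
  fun s => ∑ i : Fin n, coeff m i.val * (if s = eSt n i then 1 else 0)

lemma phiSt_apply_e (n m : ℕ) (i : Fin n) : phiSt n m (eSt n i) = coeff m i.val := by
  unfold phiSt
  rw [Finset.sum_eq_single i]
  · simp
  · intro j _ hj
    rw [if_neg (fun h => hj (eSt_inj h.symm)), mul_zero]
  · intro h; exact absurd (Finset.mem_univ i) h

lemma phiSt_apply_ne (n m : ℕ) (s : Fin n → Fin 2) (h : ∀ i, s ≠ eSt n i) :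
    phiSt n m s = 0 := by
  unfold phiSt
  apply Finset.sum_eq_zero
  intro i _
  rw [if_neg (h i), mul_zero]

lemma swap_eq {n : ℕ} {a b i : Fin n} (hab : a ≠ b) {s : Fin n → Fin 2}
    (h : (fun k => if k = a then s b else if k = b then s a else s k) = eSt n i) :
    s = eSt n (if i = a then b else if i = b then a else i) := by
  have ha' := congrFun h a
  have hb' := congrFun h b
  rw [if_pos rfl] at ha'
  rw [if_neg (Ne.symm hab), if_pos rfl] at hb'
  funext k
  by_cases hka : k = a
  · subst hka
    rw [hb']
    clear h ha' hb'
    simp only [eSt]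
    split_ifs <;> first | rfl | (exfalso; grind)
  · by_cases hkb : k = b
    · subst hkb
      rw [ha']
      clear h ha' hb'
      simp only [eSt]
      split_ifs <;> first | rfl | (exfalso; grind)
    · have hk := congrFun h k
      rw [if_neg hka, if_neg hkb] at hk
      rw [hk]
      clear h ha' hb' hk
      simp only [eSt]
      split_ifs <;> first | rfl | (exfalso; grind)

lemma swap_e_a {n : ℕ} (a b : Fin n) (hab : a ≠ b) :
    (fun k => if k = a then eSt n a b else if k = b then eSt n a a else eSt n a k)
      = eSt n b := by
  funext k
  simp only [eSt]
  split_ifs <;> first | rfl | (exfalso; grind)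

lemma swap_e_b {n : ℕ} (a b : Fin n) (hab : a ≠ b) :
    (fun k => if k = a then eSt n b b else if k = b then eSt n b a else eSt n b k)
      = eSt n a := by
  funext k
  simp only [eSt]
  split_ifs <;> first | rfl | (exfalso; grind)

lemma step (n m : ℕ) (hm : m + 1 < n) :
    applySQ n ⟨m, by omega⟩ ⟨m + 1, hm⟩ (phiSt n m) = phiSt n (m + 1) := by
  set a : Fin n := ⟨m, by omega⟩ with ha_def
  set b : Fin n := ⟨m + 1, hm⟩ with hb_def
  have hab : a ≠ b := by simp [ha_def, hb_def, Fin.ext_iff]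
  have haval : a.val = m := rfl
  have hbval : b.val = m + 1 := rfl
  have hinv : ((1 : ℂ) / Real.sqrt 2) = (((Real.sqrt 2 : ℝ) : ℂ))⁻¹ := one_div _
  funext s
  unfold applySQ
  by_cases hs : s a = s b
  · rw [if_pos hs]
    unfold phiSt
    refine Finset.sum_congr rfl fun i _ => ?_
    by_cases he : s = eSt n i
    · have hia : i ≠ a := by
        rintro rfl
        rw [he] at hs
        simp [eSt, Ne.symm hab] at hs
      have hib : i ≠ b := by
        rintro rfl
        rw [he] at hs
        simp [eSt, hab] at hs
      have h1 : i.val ≠ m := fun h => hia (Fin.ext (h.trans haval.symm))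
      have h2 : i.val ≠ m + 1 := fun h => hib (Fin.ext (h.trans hbval.symm))
      congr 1
      unfold coeff
      split_ifs <;> first | rfl | omega
    · rw [if_neg he, mul_zero, mul_zero]
  · rw [if_neg hs]
    by_cases h1 : s = eSt n a
    · subst h1
      rw [swap_e_a a b hab, phiSt_apply_e, phiSt_apply_e, phiSt_apply_e,
        haval, hbval]
      unfold coeff
      split_ifs <;> first | omega | (rw [hinv]; ring)
    · by_cases h2 : s = eSt n b
      · subst h2
        rw [swap_e_b a b hab, phiSt_apply_e, phiSt_apply_e, phiSt_apply_e,
          haval, hbval]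
        unfold coeff
        split_ifs <;> first | omega | (rw [hinv, pow_succ, pow_succ]; ring)
      · have hall : ∀ i, s ≠ eSt n i := by
          intro i he
          rcases eq_or_ne i a with rfl | hia
          · exact h1 he
          rcases eq_or_ne i b with rfl | hib
          · exact h2 he
          apply hs
          rw [he]
          simp only [eSt, if_neg (fun h : a = i => hia h.symm),
            if_neg (fun h : b = i => hib h.symm)]
        have hall' : ∀ i, (fun k => if k = a then s b else if k = b then s a else s k)
            ≠ eSt n i := by
          intro i he
          exact hall _ (swap_eq hab he)
        rw [phiSt_apply_ne _ _ _ hall, phiSt_apply_ne _ _ _ hall',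
          phiSt_apply_ne _ _ _ hall]
        ring

/-- the `n`-independent gate -/
noncomputable def gateN (n : ℕ) (ψ : (Fin n → Fin 2) → ℂ) (j : ℕ) :
    (Fin n → Fin 2) → ℂ :=
  if h : j + 1 < n then applySQ n ⟨j, by omega⟩ ⟨j + 1, h⟩ ψ else ψ

lemma foldl_range (n : ℕ) (m : ℕ) (hm : m ≤ n - 1) (hn : 1 ≤ n) :
    (List.range m).foldl (gateN n) (phiSt n 0) = phiSt n m := by
  induction m with
  | zero => simp
  | succ k ih =>
    rw [List.range_succ, List.foldl_append, ih (by omega), List.foldl_cons,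
      List.foldl_nil]
    unfold gateN
    rw [dif_pos (by omega : k + 1 < n)]
    exact step n k (by omega)

lemma wState_eq (n : ℕ) (hn : 2 ≤ n) : wState n = phiSt n (n - 1) := by
  have hinit : (fun s : Fin n → Fin 2 =>
      if s = (fun k : Fin n => if (k : ℕ) = 0 then (1 : Fin 2) else 0) then (1 : ℂ) else 0)
      = phiSt n 0 := by
    funext s
    have he0 : (fun k : Fin n => if (k : ℕ) = 0 then (1 : Fin 2) else 0)
        = eSt n ⟨0, by omega⟩ := by
      funext k
      simp only [eSt, Fin.ext_iff]
    rw [he0]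
    unfold phiSt
    rw [Finset.sum_eq_single (⟨0, by omega⟩ : Fin n)]
    · simp [coeff]
    · intro j _ hj
      have hj0 : (j : ℕ) ≠ 0 := fun h => hj (Fin.ext h)
      simp [coeff, hj0]
    · intro h; exact absurd (Finset.mem_univ _) h
  unfold wState
  rw [hinit]
  have hfun : (fun (ψ : (Fin n → Fin 2) → ℂ) (j : Fin (n - 1)) =>
      applySQ n ⟨j.val, by have := j.isLt; omega⟩ ⟨j.val + 1, by have := j.isLt; omega⟩ ψ)
      = fun ψ j => gateN n ψ j.val := by
    funext ψ j
    unfold gateN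
    rw [dif_pos (by have := j.isLt; omega : j.val + 1 < n)]
  rw [hfun, show (List.finRange (n - 1)) = List.map (fun j : Fin (n-1) => j)
    (List.finRange (n - 1)) by simp, List.foldl_map,
    show (List.foldl (fun x (y : Fin (n-1)) => gateN n x ↑y) (phiSt n 0)
      (List.finRange (n - 1))) = List.foldl (gateN n) (phiSt n 0)
      (List.map Fin.val (List.finRange (n - 1))) by rw [List.foldl_map],
    (List.ext_getElem (by simp) (by simp) :
      List.map Fin.val (List.finRange (n - 1)) = List.range (n - 1))]
  exact foldl_range n (n - 1) le_rfl (by omega)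

lemma inv_sqrt_pow (k : ℕ) : (Real.sqrt 2)⁻¹ ^ k = (2 : ℝ) ^ (-(k : ℝ) / 2) := by
  rw [Real.sqrt_eq_rpow, ← Real.rpow_neg_one (2 ^ ((1:ℝ)/2)), ← Real.rpow_natCast
    (((2:ℝ) ^ ((1:ℝ)/2)) ^ (-1:ℝ)) k, ← Real.rpow_mul (by positivity),
    ← Real.rpow_mul (by norm_num)]
  ring_nf

lemma sq_amp (x : ℝ) : ((2:ℝ) ^ (-x/2))^2 = (2:ℝ) ^ (-x) := by
  rw [← Real.rpow_natCast ((2:ℝ)^(-x/2)) 2, ← Real.rpow_mul (by norm_num)]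
  norm_num

lemma rpow_neg_nat (k : ℕ) : (2:ℝ) ^ (-(k:ℝ)) = ((1:ℝ)/2)^k := by
  rw [Real.rpow_neg (by norm_num), Real.rpow_natCast, one_div, inv_pow]

lemma geom (m : ℕ) : (∑ j ∈ Finset.range m, ((1:ℝ)/2)^(j+1)) + ((1:ℝ)/2)^m = 1 := by
  induction m with
  | zero => norm_num
  | succ k ih =>
    rw [Finset.sum_range_succ, add_assoc,
      show ((1:ℝ)/2)^(k+1) + ((1:ℝ)/2)^(k+1) = ((1:ℝ)/2)^k by rw [pow_succ]; ring]
    exact ih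

end SQAux

/-- The resulting state is supported on the single-excitation basis states, and up to
single-qubit phases its amplitudes are the positive numbers αᵢ, which are normalized. -/
theorem sqisw_chain_generates_wlike_state (n : ℕ) (hn : 2 ≤ n) :
    (∀ s : Fin n → Fin 2,
        (Finset.univ.filter fun k => s k = 1).card ≠ 1 → wState n s = 0) ∧
    (∀ i : Fin n,
        ‖wState n (fun k => if k = i then 1 else 0)‖ = wAmp n i) ∧
    (∀ i : Fin n, 0 < wAmp n i) ∧
    (∑ i : Fin n, wAmp n i ^ 2 = 1) := by
  have hw := SQAux.wState_eq n hn
  refine ⟨?_, ?_, ?_, ?_⟩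
  · intro s hcard
    rw [hw]
    apply SQAux.phiSt_apply_ne
    intro i he
    apply hcard
    have hset : (Finset.univ.filter fun k => s k = 1) = {i} := by
      ext k
      simp only [Finset.mem_filter, Finset.mem_univ, true_and, Finset.mem_singleton, he,
        SQAux.eSt]
      constructor
      · intro h
        by_contra hk
        rw [if_neg hk] at h
        exact absurd h (by decide)
      · intro h; subst h; rw [if_pos rfl]
    rw [hset, Finset.card_singleton]
  · intro i
    have he : (fun k => if k = i then (1:Fin 2) else 0) = SQAux.eSt n i := rfl
    rw [hw, he, SQAux.phiSt_apply_e]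
    unfold SQAux.coeff wAmp
    by_cases hi : (i:ℕ) < n - 1
    · rw [if_pos hi, if_pos hi, norm_mul, norm_pow, Complex.norm_I, one_pow, one_mul,
        norm_pow, norm_inv, Complex.norm_real, Real.norm_eq_abs, _root_.abs_of_nonneg (Real.sqrt_nonneg 2),
        SQAux.inv_sqrt_pow]
      congr 1
      push_cast
      ring
    · have hieq : (i:ℕ) = n - 1 := by have := i.isLt; omega
      rw [if_neg hi, if_neg (by omega : ¬ (i:ℕ) < n - 1),
        if_pos hieq, norm_mul, norm_pow, Complex.norm_I, one_pow, one_mul,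
        norm_pow, norm_inv, Complex.norm_real, Real.norm_eq_abs, _root_.abs_of_nonneg (Real.sqrt_nonneg 2),
        SQAux.inv_sqrt_pow]
      congr 1
      rw [hieq, Nat.cast_sub (by omega : 1 ≤ n)]
      push_cast
      ring
  · intro i
    unfold wAmp
    split_ifs <;> positivity
  · have hconv : ∀ i : Fin n, wAmp n i ^ 2
        = if (i:ℕ) < n - 1 then ((1:ℝ)/2)^((i:ℕ)+1) else ((1:ℝ)/2)^(n-1) := by
      intro i
      unfold wAmp
      by_cases hi : (i:ℕ) < n - 1
      · rw [if_pos hi, if_pos hi, SQAux.sq_amp,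
          show -((i:ℕ)+1 : ℝ) = -(((i:ℕ)+1 : ℕ) : ℝ) by push_cast; ring,
          SQAux.rpow_neg_nat]
      · rw [if_neg hi, if_neg hi, SQAux.sq_amp,
          show -((n:ℝ)-1) = -(((n-1 : ℕ)) : ℝ) by
            rw [Nat.cast_sub (by omega : 1 ≤ n)]; push_cast; ring,
          SQAux.rpow_neg_nat]
    have hsum : ∑ i : Fin n, wAmp n i ^ 2
        = ∑ j ∈ Finset.range n,
            (if j < n - 1 then ((1:ℝ)/2)^(j+1) else ((1:ℝ)/2)^(n-1)) := by
      rw [← Fin.sum_univ_eq_sum_range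
        (fun j => if j < n - 1 then ((1:ℝ)/2)^(j+1) else ((1:ℝ)/2)^(n-1)) n]
      exact Finset.sum_congr rfl fun i _ => hconv i
    rw [hsum]
    obtain ⟨m, rfl⟩ : ∃ m, n = m + 1 := ⟨n - 1, by omega⟩
    simp only [Nat.add_sub_cancel]
    rw [Finset.sum_range_succ, if_neg (lt_irrefl m),
      Finset.sum_congr rfl (fun j hj => if_pos (Finset.mem_range.mp hj))]
    exact SQAux.geom m
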